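/- Let H : ℝ² → ℝ be C³ and T the triangle with vertices (0,0), (2ε,0), (ε,√3ε). Then ∫_T H(x₁,x₂) dx₁dx₂ = (√3/2) ε ∫_0^{2ε} H(x₁, 0) dx₁ + O(ε³) as ε → 0. -/

import Mathlib

/-- Integral of `H` over the triangle with vertices `(0,0)`, `(2ε,0)`, `(ε,√3 ε)`. -/
noncomputable def triInt (H : ℝ × ℝ → ℝ) (ε : ℝ) : ℝ :=
  (∫ x in (0 : ℝ)..ε, ∫ y in (0 : ℝ)..(Real.sqrt 3 * x), H (x, y))
    + ∫ x in ε..(2 * ε), ∫ y in (0 : ℝ)..(Real.sqrt 3 * (2 * ε - x)), H (x, y)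

open intervalIntegral MeasureTheory Set

set_option maxHeartbeats 1000000 in
/-- For a C³ function `H`, the integral over the triangle with vertices `(0,0)`, `(2ε,0)`,
`(ε,√3ε)` satisfies `∫_T H = (√3/2) ε ∫_0^{2ε} H(x₁,0) dx₁ + O(ε³)`. -/
theorem triangle_integral_base_edge
    (H : ℝ × ℝ → ℝ) (hH : ContDiff ℝ 3 H) :
    ∃ C : ℝ, ∀ ε : ℝ, 0 < ε → ε ≤ 1 →
      |triInt H ε - Real.sqrt 3 / 2 * ε * ∫ x in (0 : ℝ)..(2 * ε), H (x, 0)|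
        ≤ C * ε ^ 3 := by
  have hH1 : ContDiff ℝ 1 H := hH.of_le (by norm_num)
  have cH : Continuous H := hH.continuous
  have s3nn : (0:ℝ) ≤ Real.sqrt 3 := Real.sqrt_nonneg 3
  have s3sq : Real.sqrt 3 ^ 2 = 3 := Real.sq_sqrt (by norm_num)
  have s3le : Real.sqrt 3 ≤ 2 := by nlinarith
  -- compact convex box
  set K : Set (ℝ × ℝ) := Set.Icc ((0:ℝ),(0:ℝ)) ((2:ℝ),(4:ℝ)) with hKdef
  obtain ⟨L₀, hL₀⟩ := isCompact_Icc.exists_bound_of_continuousOn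
    (hH1.continuous_fderiv one_ne_zero).continuousOn
  set L := max L₀ 0 with hLdef
  have hL0 : 0 ≤ L := le_max_right _ _
  have memK : ∀ x y : ℝ, 0 ≤ x → x ≤ 2 → 0 ≤ y → y ≤ 4 → ((x, y) : ℝ × ℝ) ∈ K := by
    intro x y h1 h2 h3 h4
    simp only [hKdef, Set.mem_Icc, Prod.le_def]
    exact ⟨⟨h1, h3⟩, ⟨h2, h4⟩⟩
  have lip : ∀ p ∈ K, ∀ q ∈ K, |H p - H q| ≤ L * ‖p - q‖ := by
    intro p hp q hq
    have := Convex.norm_image_sub_le_of_norm_fderiv_le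
      (f := H) (C := L) (fun z _ => (hH1.differentiable one_ne_zero).differentiableAt)
      (fun z hz => le_trans (hL₀ z hz) (le_max_left _ _)) (convex_Icc _ _) hq hp
    simpa [Real.norm_eq_abs] using this
  -- Lipschitz bound in the vertical direction
  have vert : ∀ x y : ℝ, 0 ≤ x → x ≤ 2 → 0 ≤ y → y ≤ 4 →
      |H (x, y) - H (x, 0)| ≤ L * y := by
    intro x y h1 h2 h3 h4
    have := lip _ (memK x y h1 h2 h3 h4) _ (memK x 0 h1 h2 le_rfl (by norm_num))
    have hnorm : ‖((x, y) : ℝ × ℝ) - (x, 0)‖ = y := by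
      have : ((x, y) : ℝ × ℝ) - (x, 0) = (0, y) := by simp
      rw [this, Prod.norm_def]
      simp [abs_of_nonneg h3, h3]
    rwa [hnorm] at this
  have horiz : ∀ x : ℝ, 0 ≤ x → x ≤ 2 → |H (x, 0) - H (0, 0)| ≤ L * x := by
    intro x h1 h2
    have := lip _ (memK x 0 h1 h2 le_rfl (by norm_num)) _ (memK 0 0 le_rfl (by norm_num) le_rfl (by norm_num))
    have hnorm : ‖((x, 0) : ℝ × ℝ) - (0, 0)‖ = x := by
      have : ((x, 0) : ℝ × ℝ) - (0, 0) = (x, 0) := by simp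
      rw [this, Prod.norm_def]
      simp [abs_of_nonneg h1, h1]
    rwa [hnorm] at this
  -- inner integral estimate
  have inner : ∀ x h : ℝ, 0 ≤ x → x ≤ 2 → 0 ≤ h → h ≤ 4 →
      |(∫ y in (0:ℝ)..h, H (x, y)) - h * H (x, 0)| ≤ L * h ^ 2 := by
    intro x h hx0 hx2 hh0 hh4
    have cHx : Continuous fun y => H (x, y) := cH.comp (continuous_const.prodMk continuous_id)
    have e : h * H (x, 0) = ∫ y in (0:ℝ)..h, H (x, 0) := by simp [mul_comm]
    rw [e, ← intervalIntegral.integral_sub (cHx.intervalIntegrable _ _) intervalIntegrable_const]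
    have := intervalIntegral.norm_integral_le_of_norm_le_const (C := L * h)
      (f := fun y => H (x, y) - H (x, 0)) (a := (0:ℝ)) (b := h) ?_
    · calc |∫ y in (0:ℝ)..h, (H (x, y) - H (x, 0))| ≤ L * h * |h - 0| := this
        _ = L * h ^ 2 := by rw [abs_of_nonneg (by linarith)]; ring
    · intro y hy
      rw [Set.uIoc_of_le hh0] at hy
      have hy0 : 0 ≤ y := le_of_lt hy.1
      have hyh : y ≤ h := hy.2
      have := vert x y hx0 hx2 hy0 (le_trans hyh hh4)
      calc ‖H (x, y) - H (x, 0)‖ = |H (x, y) - H (x, 0)| := rfl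
        _ ≤ L * y := this
        _ ≤ L * h := by nlinarith
  refine ⟨12 * L, fun ε hε hε1 => ?_⟩
  set c : ℝ := Real.sqrt 3 / 2 * ε with hcdef
  set b : ℝ → ℝ := fun x => H (x, 0) with hbdef
  set g1 : ℝ → ℝ := fun x => ∫ y in (0:ℝ)..(Real.sqrt 3 * x), H (x, y) with hg1def
  set g2 : ℝ → ℝ := fun x => ∫ y in (0:ℝ)..(Real.sqrt 3 * (2 * ε - x)), H (x, y) with hg2def
  have cb : Continuous b := cH.comp (continuous_id.prodMk continuous_const)
  have cHu : Continuous (Function.uncurry fun x y => H (x, y)) :=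
    cH.comp (continuous_fst.prodMk continuous_snd)
  have cg1 : Continuous g1 :=
    intervalIntegral.continuous_parametric_intervalIntegral_of_continuous cHu
      (continuous_const.mul continuous_id)
  have cg2 : Continuous g2 :=
    intervalIntegral.continuous_parametric_intervalIntegral_of_continuous cHu
      (continuous_const.mul (continuous_const.sub continuous_id))
  set f1 : ℝ → ℝ := fun x => (g1 x - Real.sqrt 3 * x * b x)
      + (Real.sqrt 3 * x - c) * (b x - H (0, 0)) with hf1def
  set f2 : ℝ → ℝ := fun x => (g2 x - Real.sqrt 3 * (2 * ε - x) * b x)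
      + (Real.sqrt 3 * (2 * ε - x) - c) * (b x - H (0, 0)) with hf2def
  have cf1 : Continuous f1 :=
    ((cg1.sub ((continuous_const.mul continuous_id).mul cb)).add
      (((continuous_const.mul continuous_id).sub continuous_const).mul (cb.sub continuous_const)))
  have cf2 : Continuous f2 :=
    ((cg2.sub ((continuous_const.mul (continuous_const.sub continuous_id)).mul cb)).add
      (((continuous_const.mul (continuous_const.sub continuous_id)).sub continuous_const).mul
        (cb.sub continuous_const)))
  -- the weight integrals vanish
  have hz1 : (∫ x in (0:ℝ)..ε, (Real.sqrt 3 * x - c)) = 0 := by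
    rw [intervalIntegral.integral_sub (Continuous.intervalIntegrable (by fun_prop) _ _)
      intervalIntegrable_const, intervalIntegral.integral_const_mul, integral_id, intervalIntegral.integral_const]
    simp only [hcdef, smul_eq_mul]
    ring
  have hz2 : (∫ x in ε..(2*ε), (Real.sqrt 3 * (2 * ε - x) - c)) = 0 := by
    have : (fun x => Real.sqrt 3 * (2 * ε - x) - c)
        = fun x => (Real.sqrt 3 * (2 * ε) - c) - Real.sqrt 3 * x := by
      funext x; ring
    rw [this, intervalIntegral.integral_sub intervalIntegrable_const
      (Continuous.intervalIntegrable (by fun_prop) _ _),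
      intervalIntegral.integral_const_mul, integral_id, intervalIntegral.integral_const]
    simp only [hcdef, smul_eq_mul]
    ring
  -- decomposition of the error
  have e1 : (∫ x in (0:ℝ)..ε, f1 x) = (∫ x in (0:ℝ)..ε, (g1 x - c * b x)) := by
    have hpt : ∀ x, f1 x = (g1 x - c * b x) - (Real.sqrt 3 * x - c) * H (0, 0) := by
      intro x; simp only [hf1def]; ring
    calc (∫ x in (0:ℝ)..ε, f1 x)
        = ∫ x in (0:ℝ)..ε, ((g1 x - c * b x) - (Real.sqrt 3 * x - c) * H (0, 0)) :=
          intervalIntegral.integral_congr (fun x _ => hpt x)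
      _ = (∫ x in (0:ℝ)..ε, (g1 x - c * b x))
          - ∫ x in (0:ℝ)..ε, (Real.sqrt 3 * x - c) * H (0, 0) := by
          exact intervalIntegral.integral_sub
            ((cg1.sub (continuous_const.mul cb)).intervalIntegrable _ _)
            ((((continuous_const.mul continuous_id).sub continuous_const).mul
              continuous_const).intervalIntegrable _ _)
      _ = (∫ x in (0:ℝ)..ε, (g1 x - c * b x)) := by
          rw [intervalIntegral.integral_mul_const, hz1]; ring
  have e2 : (∫ x in ε..(2*ε), f2 x) = (∫ x in ε..(2*ε), (g2 x - c * b x)) := by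
    have hpt : ∀ x, f2 x = (g2 x - c * b x) - (Real.sqrt 3 * (2 * ε - x) - c) * H (0, 0) := by
      intro x; simp only [hf2def]; ring
    calc (∫ x in ε..(2*ε), f2 x)
        = ∫ x in ε..(2*ε), ((g2 x - c * b x) - (Real.sqrt 3 * (2 * ε - x) - c) * H (0, 0)) :=
          intervalIntegral.integral_congr (fun x _ => hpt x)
      _ = (∫ x in ε..(2*ε), (g2 x - c * b x))
          - ∫ x in ε..(2*ε), (Real.sqrt 3 * (2 * ε - x) - c) * H (0, 0) := by
          exact intervalIntegral.integral_sub
            ((cg2.sub (continuous_const.mul cb)).intervalIntegrable _ _)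
            ((((continuous_const.mul (continuous_const.sub continuous_id)).sub
              continuous_const).mul continuous_const).intervalIntegrable _ _)
      _ = (∫ x in ε..(2*ε), (g2 x - c * b x)) := by
          rw [intervalIntegral.integral_mul_const, hz2]; ring
  have key : triInt H ε - Real.sqrt 3 / 2 * ε * (∫ x in (0:ℝ)..(2*ε), H (x, 0))
      = (∫ x in (0:ℝ)..ε, f1 x) + (∫ x in ε..(2*ε), f2 x) := by
    have hb1 : IntervalIntegrable b volume 0 ε := cb.intervalIntegrable _ _
    have hb2 : IntervalIntegrable b volume ε (2*ε) := cb.intervalIntegrable _ _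
    have hsplit : (∫ x in (0:ℝ)..(2*ε), b x)
        = (∫ x in (0:ℝ)..ε, b x) + ∫ x in ε..(2*ε), b x :=
      (intervalIntegral.integral_add_adjacent_intervals hb1 hb2).symm
    have htri : triInt H ε = (∫ x in (0:ℝ)..ε, g1 x) + ∫ x in ε..(2*ε), g2 x := rfl
    have i1 : (∫ x in (0:ℝ)..ε, (g1 x - c * b x))
        = (∫ x in (0:ℝ)..ε, g1 x) - c * ∫ x in (0:ℝ)..ε, b x := by
      rw [intervalIntegral.integral_sub (g := fun x => c * b x) (cg1.intervalIntegrable _ _)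
        ((continuous_const.mul cb).intervalIntegrable _ _),
        intervalIntegral.integral_const_mul]
    have i2 : (∫ x in ε..(2*ε), (g2 x - c * b x))
        = (∫ x in ε..(2*ε), g2 x) - c * ∫ x in ε..(2*ε), b x := by
      rw [intervalIntegral.integral_sub (g := fun x => c * b x) (cg2.intervalIntegrable _ _)
        ((continuous_const.mul cb).intervalIntegrable _ _),
        intervalIntegral.integral_const_mul]
    rw [e1, e2, i1, i2, htri]
    have : (∫ x in (0:ℝ)..(2*ε), H (x, 0)) = (∫ x in (0:ℝ)..ε, b x) + ∫ x in ε..(2*ε), b x := by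
      exact hsplit
    rw [this, hcdef]
    ring
  -- pointwise bounds
  have bd1 : |∫ x in (0:ℝ)..ε, f1 x| ≤ 5 * L * ε ^ 2 * ε := by
    have := intervalIntegral.norm_integral_le_of_norm_le_const (C := 5 * L * ε ^ 2)
      (f := f1) (a := (0:ℝ)) (b := ε) ?_
    · calc |∫ x in (0:ℝ)..ε, f1 x| ≤ 5 * L * ε ^ 2 * |ε - 0| := this
        _ = 5 * L * ε ^ 2 * ε := by rw [abs_of_nonneg (by linarith)]; ring
    · intro x hx
      rw [Set.uIoc_of_le (le_of_lt hε)] at hx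
      have hx0 : 0 ≤ x := le_of_lt hx.1
      have hxe : x ≤ ε := hx.2
      have hx2 : x ≤ 2 := by linarith
      have hinner := inner x (Real.sqrt 3 * x) hx0 hx2 (by positivity)
        (by nlinarith)
      have hhor := horiz x hx0 hx2
      have h1 : |g1 x - Real.sqrt 3 * x * b x| ≤ L * (Real.sqrt 3 * x) ^ 2 := hinner
      have h2 : |Real.sqrt 3 * x - c| ≤ 2 * ε := by
        rw [abs_le]
        constructor
        · simp only [hcdef]; nlinarith
        · simp only [hcdef]; nlinarith
      have h3 : |b x - H (0, 0)| ≤ L * ε := le_trans hhor (by nlinarith)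
      calc ‖f1 x‖ = |(g1 x - Real.sqrt 3 * x * b x)
            + (Real.sqrt 3 * x - c) * (b x - H (0, 0))| := rfl
        _ ≤ |g1 x - Real.sqrt 3 * x * b x| + |(Real.sqrt 3 * x - c) * (b x - H (0, 0))| :=
            abs_add_le _ _
        _ ≤ L * (Real.sqrt 3 * x) ^ 2 + (2 * ε) * (L * ε) := by
            refine add_le_add h1 ?_
            rw [abs_mul]
            exact mul_le_mul h2 h3 (abs_nonneg _) (by positivity)
        _ ≤ 5 * L * ε ^ 2 := by
            have e : (Real.sqrt 3 * x) ^ 2 = 3 * x ^ 2 := by rw [mul_pow, s3sq]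
            rw [e]
            nlinarith [mul_le_mul_of_nonneg_left (pow_le_pow_left₀ hx0 hxe 2) hL0]
  have bd2 : |∫ x in ε..(2*ε), f2 x| ≤ 7 * L * ε ^ 2 * ε := by
    have := intervalIntegral.norm_integral_le_of_norm_le_const (C := 7 * L * ε ^ 2)
      (f := f2) (a := ε) (b := 2*ε) ?_
    · calc |∫ x in ε..(2*ε), f2 x| ≤ 7 * L * ε ^ 2 * |2 * ε - ε| := this
        _ = 7 * L * ε ^ 2 * ε := by rw [show (2:ℝ) * ε - ε = ε by ring,
            abs_of_nonneg (le_of_lt hε)]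
    · intro x hx
      rw [Set.uIoc_of_le (by linarith)] at hx
      have hx0 : 0 ≤ x := by linarith [hx.1]
      have hxe : x ≤ 2 * ε := hx.2
      have hεx : ε ≤ x := le_of_lt hx.1
      have hx2 : x ≤ 2 := by linarith
      have hh0 : 0 ≤ Real.sqrt 3 * (2 * ε - x) := by
        apply mul_nonneg s3nn; linarith
      have hinner := inner x (Real.sqrt 3 * (2 * ε - x)) hx0 hx2 hh0 (by nlinarith)
      have hhor := horiz x hx0 hx2
      have h2 : |Real.sqrt 3 * (2 * ε - x) - c| ≤ 2 * ε := by
        rw [abs_le]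
        constructor
        · simp only [hcdef]; nlinarith
        · simp only [hcdef]; nlinarith
      have h3 : |b x - H (0, 0)| ≤ L * (2 * ε) := le_trans hhor (by nlinarith)
      calc ‖f2 x‖ = |(g2 x - Real.sqrt 3 * (2 * ε - x) * b x)
            + (Real.sqrt 3 * (2 * ε - x) - c) * (b x - H (0, 0))| := rfl
        _ ≤ |g2 x - Real.sqrt 3 * (2 * ε - x) * b x|
            + |(Real.sqrt 3 * (2 * ε - x) - c) * (b x - H (0, 0))| := abs_add_le _ _
        _ ≤ L * (Real.sqrt 3 * (2 * ε - x)) ^ 2 + (2 * ε) * (L * (2 * ε)) := by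
            refine add_le_add hinner ?_
            rw [abs_mul]
            exact mul_le_mul h2 h3 (abs_nonneg _) (by positivity)
        _ ≤ 7 * L * ε ^ 2 := by
            have e : (Real.sqrt 3 * (2 * ε - x)) ^ 2 = 3 * (2 * ε - x) ^ 2 := by
              rw [mul_pow, s3sq]
            rw [e]
            nlinarith [mul_le_mul_of_nonneg_left
              (pow_le_pow_left₀ (by linarith : (0:ℝ) ≤ 2 * ε - x) (by linarith : 2 * ε - x ≤ ε) 2) hL0]
  calc |triInt H ε - Real.sqrt 3 / 2 * ε * ∫ x in (0:ℝ)..(2*ε), H (x, 0)|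
      = |(∫ x in (0:ℝ)..ε, f1 x) + (∫ x in ε..(2*ε), f2 x)| := by rw [key]
    _ ≤ |∫ x in (0:ℝ)..ε, f1 x| + |∫ x in ε..(2*ε), f2 x| := abs_add_le _ _
    _ ≤ 5 * L * ε ^ 2 * ε + 7 * L * ε ^ 2 * ε := add_le_add bd1 bd2
    _ = 12 * L * ε ^ 3 := by ring
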